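/- Let $N=(N_p)$ be a log-convex positive sequence with $N_p \ge c h^p$ for some $c,h>0$, and let $\omega_N(t) = \sup_{p\in\mathbb{N}} \log(t^p N_0 / N_p)$ for $t \ge 0$ be its associated function. If $L$ is another such sequence and there is $C>0$ with $\omega_N(t) \le \omega_L(t) + C$ for all $t \ge 0$, then $L \subset N$, i.e., there exist $C', h' > 0$ with $L_p \le C' (h')^p N_p$ for all $p$. -/

import Mathlib

/-- Komatsu's Lemma 3.8: if `N, L` are log-convex sequences satisfying `(M.0)`
and the associated functions satisfy `ω_N ≤ ω_L + C`, then `L ⊂ N`. -/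
theorem stmt14 (N L : ℕ → ℝ) (hNpos : ∀ p, 0 < N p) (hLpos : ∀ p, 0 < L p)
    (hNlc : ∀ p : ℕ, (N (p + 1)) ^ 2 ≤ N p * N (p + 2))
    (hLlc : ∀ p : ℕ, (L (p + 1)) ^ 2 ≤ L p * L (p + 2))
    (hN0 : ∃ c : ℝ, 0 < c ∧ ∃ h : ℝ, 0 < h ∧ ∀ p : ℕ, c * h ^ p ≤ N p)
    (hL0 : ∃ c : ℝ, 0 < c ∧ ∃ h : ℝ, 0 < h ∧ ∀ p : ℕ, c * h ^ p ≤ L p)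
    (ωL : ℝ → ℝ)
    (hωL : ∀ t : ℝ, 0 ≤ t →
      IsLUB {z : ℝ | ∃ p : ℕ, z = Real.log (t ^ p * L 0 / L p)} (ωL t))
    (C : ℝ)
    (hcomp : ∀ t : ℝ, 0 ≤ t → ∀ p : ℕ,
      Real.log (t ^ p * N 0 / N p) ≤ ωL t + C) :
    ∃ C' : ℝ, 0 < C' ∧ ∃ h' : ℝ, 0 < h' ∧ ∀ p : ℕ, L p ≤ C' * h' ^ p * N p := by
  have hN0pos := hNpos 0
  have hL0pos := hLpos 0
  refine ⟨Real.exp C * L 0 / N 0, by positivity, 1, one_pos, ?_⟩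
  intro p
  set t := L (p + 1) / L p with ht_def
  have htpos : 0 < t := div_pos (hLpos _) (hLpos _)
  -- ratios are monotone
  have hR : Monotone (fun j => L (j + 1) / L j) := by
    apply monotone_nat_of_le_succ
    intro j
    rw [div_le_div_iff₀ (hLpos j) (hLpos (j + 1))]
    nlinarith [hLlc j]
  -- key inequality: the sup is attained at p
  have key : ∀ q, t ^ q * L p ≤ t ^ p * L q := by
    intro q
    rcases le_total q p with hqp | hpq
    · have hd : ∀ d, d ≤ p → L p ≤ t ^ d * L (p - d) := by
        intro d
        induction d with
        | zero => intro _; simp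
        | succ d ih =>
          intro hdp
          have h1 := ih (Nat.le_of_succ_le hdp)
          set j := p - (d + 1) with hj_def
          have hj : p - d = j + 1 := by omega
          have h2 : L (j + 1) / L j ≤ t := hR (show j ≤ p by omega)
          have h3 : L (j + 1) ≤ t * L j := (div_le_iff₀ (hLpos j)).mp h2
          rw [hj] at h1
          calc L p ≤ t ^ d * L (j + 1) := h1
            _ ≤ t ^ d * (t * L j) := by
                exact mul_le_mul_of_nonneg_left h3 (by positivity)
            _ = t ^ (d + 1) * L j := by ring
      have h1 := hd (p - q) (Nat.sub_le _ _)
      have hpq' : p - (p - q) = q := by omega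
      rw [hpq'] at h1
      have h2 : t ^ q * L p ≤ t ^ q * (t ^ (p - q) * L q) :=
        mul_le_mul_of_nonneg_left h1 (by positivity)
      have h3 : t ^ q * t ^ (p - q) = t ^ p := by
        rw [← pow_add]; congr 1; omega
      calc t ^ q * L p ≤ t ^ q * (t ^ (p - q) * L q) := h2
        _ = t ^ p * L q := by rw [← mul_assoc, h3]
    · have hd : ∀ q, p ≤ q → t ^ (q - p) * L p ≤ L q := by
        intro q hq
        induction q, hq using Nat.le_induction with
        | base => simp
        | succ q hq ih =>
          have h2 : t ≤ L (q + 1) / L q := hR hq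
          have h3 : t * L q ≤ L (q + 1) := (le_div_iff₀ (hLpos q)).mp h2
          have heq : q + 1 - p = (q - p) + 1 := by omega
          calc t ^ (q + 1 - p) * L p = t * (t ^ (q - p) * L p) := by
                rw [heq]; ring
            _ ≤ t * L q := mul_le_mul_of_nonneg_left ih htpos.le
            _ ≤ L (q + 1) := h3
      have h1 := hd q hpq
      have h2 : t ^ p * (t ^ (q - p) * L p) ≤ t ^ p * L q :=
        mul_le_mul_of_nonneg_left h1 (by positivity)
      have h3 : t ^ p * t ^ (q - p) = t ^ q := by
        rw [← pow_add]; congr 1; omega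
      calc t ^ q * L p = t ^ p * (t ^ (q - p) * L p) := by rw [← mul_assoc, h3]
        _ ≤ t ^ p * L q := h2
  -- ωL t is bounded by the value at p
  have hub : ωL t ≤ Real.log (t ^ p * L 0 / L p) := by
    apply (hωL t htpos.le).2
    rintro z ⟨q, rfl⟩
    have hq0 : (0:ℝ) < t ^ q * L 0 / L q :=
      div_pos (mul_pos (pow_pos htpos q) hL0pos) (hLpos q)
    apply Real.log_le_log hq0
    rw [div_le_div_iff₀ (hLpos q) (hLpos p)]
    nlinarith [key q, hL0pos.le]
  have h3 := hcomp t htpos.le p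
  have h4 : Real.log (t ^ p * N 0 / N p) ≤ Real.log (t ^ p * L 0 / L p) + C := by
    linarith
  have hA : (0:ℝ) < t ^ p * N 0 / N p := div_pos (mul_pos (pow_pos htpos p) hN0pos) (hNpos p)
  have hB : (0:ℝ) < t ^ p * L 0 / L p := div_pos (mul_pos (pow_pos htpos p) hL0pos) (hLpos p)
  have h5 := Real.exp_le_exp.mpr h4
  rw [Real.exp_log hA, Real.exp_add, Real.exp_log hB] at h5
  have h6 : t ^ p * N 0 * L p ≤ t ^ p * L 0 / L p * Real.exp C * N p * L p := by
    have := (div_le_iff₀ (hNpos p)).mp h5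
    nlinarith [hLpos p]
  have h7 : t ^ p * (N 0 * L p) ≤ t ^ p * (L 0 * Real.exp C * N p) := by
    have hLp := hLpos p
    have : t ^ p * L 0 / L p * Real.exp C * N p * L p
        = t ^ p * (L 0 * Real.exp C * N p) := by
      field_simp
    nlinarith [h6, this]
  have h8 : N 0 * L p ≤ L 0 * Real.exp C * N p :=
    le_of_mul_le_mul_left (by linarith [h7]) (pow_pos htpos p)
  rw [one_pow, mul_one, div_mul_eq_mul_div, le_div_iff₀ hN0pos]
  nlinarith [h8]
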